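/- For integers q, n, k with 1 ≤ k < n, the number of elements of C_{n,k} having no cycle of length exactly q satisfies: N̄(C_{n,k}) = [q ≠ k]·N̄(S_{n-k}) + (n-k)·N̄(C_{n,k+1}). -/

import Mathlib

def cosetC (n k : ℕ) : Set (Equiv.Perm (Fin n)) :=
  {σ | ∃ g : Equiv.Perm (Fin n), (∀ i : Fin n, (i : ℕ) < k - 1 → g i = i) ∧
    σ = g * ((List.finRange n).take k).formPerm}

/-- No cycle of length exactly q (fixed points count as cycles of length 1). -/
def NoCycleLenEq {n : ℕ} (q : ℕ) (σ : Equiv.Perm (Fin n)) : Prop :=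
  ∀ x : Fin n, Function.minimalPeriod σ x ≠ q

open Equiv Function

abbrev ckk (n k : ℕ) : Equiv.Perm (Fin n) := ((List.finRange n).take k).formPerm

lemma ck_apply_lt {n k : ℕ} (hk : 1 ≤ k) (hkn : k ≤ n) (x : Fin n) (hx : (x:ℕ) < k) :
    ckk n k x = ⟨((x:ℕ)+1) % k, lt_of_lt_of_le (Nat.mod_lt _ hk) hkn⟩ := by
  have hl : ((List.finRange n).take k).length = k := by simp; omega
  have hnd : ((List.finRange n).take k).Nodup :=
    (List.take_sublist _ _).nodup (List.nodup_finRange n)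
  have hget : ∀ j (hj : j < ((List.finRange n).take k).length),
      ((List.finRange n).take k)[j]'hj = ⟨j, by rw [hl] at hj; omega⟩ := by
    intro j hj
    simp [List.getElem_take]
  have h1 := List.formPerm_apply_getElem _ hnd (x:ℕ) (by omega)
  rw [hget _ (by omega)] at h1
  have hx' : Fin.mk (x:ℕ) (by omega) = x := rfl
  rw [hx'] at h1
  rw [h1, hget _ _]
  simp only [hl]

lemma ck_apply_ge {n k : ℕ} (x : Fin n) (hx : k ≤ (x:ℕ)) : ckk n k x = x := by
  apply List.formPerm_apply_of_notMem
  intro hmem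
  rw [List.mem_iff_getElem] at hmem
  obtain ⟨j, hj, hjx⟩ := hmem
  have hjk : j < k := by simp at hj; omega
  rw [List.getElem_take, List.getElem_finRange] at hjx
  have h2 := congrArg Fin.val hjx
  simp at h2
  omega

lemma minper_congr {α β : Type*} {f : α → α} {g : β → β} {x : α} {y : β}
    (h : ∀ j, f^[j] x = x ↔ g^[j] y = y) :
    Function.minimalPeriod f x = Function.minimalPeriod g y := by
  have hp : x ∈ Function.periodicPts f ↔ y ∈ Function.periodicPts g := by
    simp only [Function.periodicPts, Set.mem_setOf_eq, Function.IsPeriodicPt, Function.IsFixedPt]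
    exact exists_congr fun j => and_congr_right fun _ => h j
  by_cases hx : x ∈ Function.periodicPts f
  · have hy := hp.mp hx
    apply le_antisymm
    · exact Function.IsPeriodicPt.minimalPeriod_le
        (Function.minimalPeriod_pos_of_mem_periodicPts hy)
        ((h _).mpr Function.iterate_minimalPeriod)
    · exact Function.IsPeriodicPt.minimalPeriod_le
        (Function.minimalPeriod_pos_of_mem_periodicPts hx)
        ((h _).mp Function.iterate_minimalPeriod)
  · rw [Function.minimalPeriod_eq_zero_of_notMem_periodicPts hx,
      Function.minimalPeriod_eq_zero_of_notMem_periodicPts (fun hy => hx (hp.mpr hy))]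

lemma ck_pow {n k : ℕ} (hk : 1 ≤ k) (hkn : k ≤ n) (j : ℕ) :
    ∀ (x : Fin n), (x:ℕ) < k →
      (ckk n k ^ j) x = ⟨((x:ℕ)+j) % k, lt_of_lt_of_le (Nat.mod_lt _ hk) hkn⟩ := by
  induction j with
  | zero => intro x hx; apply Fin.ext; simp [Nat.mod_eq_of_lt hx]
  | succ j ih =>
    intro x hx
    have h1 : (ckk n k ^ (j+1)) x = (ckk n k ^ j) (ckk n k x) := by
      rw [pow_succ]; rfl
    rw [h1, ck_apply_lt hk hkn x hx, ih _ (Nat.mod_lt _ hk)]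
    apply Fin.ext
    show (((x:ℕ)+1) % k + j) % k = ((x:ℕ) + (j+1)) % k
    rw [Nat.mod_add_mod]
    congr 1
    omega

lemma minimalPeriod_ck {n k : ℕ} (hk : 1 ≤ k) (hkn : k ≤ n) (x : Fin n) (hx : (x:ℕ) < k) :
    Function.minimalPeriod (ckk n k) x = k := by
  have hiter : ∀ j, (ckk n k)^[j] x = (ckk n k ^ j) x := fun j => by
    rw [Equiv.Perm.iterate_eq_pow]
  have hper : Function.IsPeriodicPt (ckk n k) k x := by
    show (ckk n k)^[k] x = x
    rw [hiter, ck_pow hk hkn k x hx]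
    apply Fin.ext
    simp [Nat.add_mod_right, Nat.mod_eq_of_lt hx]
  have hle := hper.minimalPeriod_le hk
  have hpos := hper.minimalPeriod_pos hk
  have hm : (ckk n k)^[Function.minimalPeriod (ckk n k) x] x = x :=
    Function.iterate_minimalPeriod
  rw [hiter, ck_pow hk hkn _ x hx] at hm
  have hm2 : ((x:ℕ) + Function.minimalPeriod (ckk n k) x) % k = (x:ℕ) :=
    congrArg Fin.val hm
  set m := Function.minimalPeriod (ckk n k) x with hmdef
  have hdvd : k ∣ m := by
    apply Nat.dvd_of_mod_eq_zero
    set r := m % k with hrdef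
    have hr : r < k := Nat.mod_lt _ hk
    have hdm := Nat.div_add_mod m k
    have hsplit : (x:ℕ) + m = ((x:ℕ) + r) + k * (m / k) := by omega
    rw [hsplit, Nat.add_mul_mod_self_left] at hm2
    have h3 : ((x:ℕ) + r) % k = (x:ℕ) := hm2
    by_cases hcase : (x:ℕ) + r < k
    · rw [Nat.mod_eq_of_lt hcase] at h3; omega
    · rw [Nat.mod_eq_sub_mod (by omega), Nat.mod_eq_of_lt (by omega)] at h3
      omega
  exact le_antisymm hle (Nat.le_of_dvd hpos hdvd)

section DisjointProd
variable {α : Type*} (g c : Equiv.Perm α) (p : α → Prop)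
  (hg : ∀ x, p x → g x = x) (hc : ∀ x, ¬ p x → c x = x)

include hg hc in
lemma mul_pow_apply_left (j : ℕ) :
    ∀ x, p x → ((g * c) ^ j) x = (c ^ j) x := by
  have hclosed : ∀ x, p x → p (c x) := by
    intro x hx
    by_contra hcx
    have h1 : c (c x) = c x := hc _ hcx
    have h2 : c x = x := c.injective h1
    rw [h2] at hcx; exact hcx hx
  induction j with
  | zero => intro x _; simp
  | succ j ih =>
    intro x hx
    have h1 : ((g * c) ^ (j+1)) x = ((g * c) ^ j) ((g * c) x) := by rw [pow_succ]; rfl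
    have h2 : (c ^ (j+1)) x = (c ^ j) (c x) := by rw [pow_succ]; rfl
    rw [h1, h2]
    have h3 : (g * c) x = c x := by
      show g (c x) = c x
      exact hg _ (hclosed x hx)
    rw [h3]
    exact ih _ (hclosed x hx)

include hg hc in
lemma mul_pow_apply_right (j : ℕ) :
    ∀ x, ¬ p x → ((g * c) ^ j) x = (g ^ j) x := by
  have hclosed : ∀ x, ¬ p x → ¬ p (g x) := by
    intro x hx
    by_contra hgx
    have h1 : g (g x) = g x := hg _ hgx
    have h2 : g x = x := g.injective h1
    rw [h2] at hgx; exact hx hgx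
  induction j with
  | zero => intro x _; simp
  | succ j ih =>
    intro x hx
    have h1 : ((g * c) ^ (j+1)) x = ((g * c) ^ j) ((g * c) x) := by rw [pow_succ]; rfl
    have h2 : (g ^ (j+1)) x = (g ^ j) (g x) := by rw [pow_succ]; rfl
    rw [h1, h2]
    have h3 : (g * c) x = g x := by
      show g (c x) = g x
      rw [hc _ hx]
    rw [h3]
    exact ih _ (hclosed x hx)

include hg hc in
lemma minper_mul_left {x : α} (hx : p x) :
    Function.minimalPeriod (g * c) x = Function.minimalPeriod c x := by
  apply minper_congr
  intro j
  rw [Equiv.Perm.iterate_eq_pow, Equiv.Perm.iterate_eq_pow,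
    mul_pow_apply_left g c p hg hc j x hx]

include hg hc in
lemma minper_mul_right {x : α} (hx : ¬ p x) :
    Function.minimalPeriod (g * c) x = Function.minimalPeriod g x := by
  apply minper_congr
  intro j
  rw [Equiv.Perm.iterate_eq_pow, Equiv.Perm.iterate_eq_pow,
    mul_pow_apply_right g c p hg hc j x hx]

end DisjointProd

lemma minper_conj {α : Type*} (π σ : Equiv.Perm α) (x : α) :
    Function.minimalPeriod (π * σ * π⁻¹) x = Function.minimalPeriod σ (π⁻¹ x) := by
  apply minper_congr
  intro j
  rw [Equiv.Perm.iterate_eq_pow, Equiv.Perm.iterate_eq_pow]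
  have h1 : (π * σ * π⁻¹) ^ j = π * σ ^ j * π⁻¹ := conj_pow ..
  rw [h1]
  show π ((σ ^ j) (π⁻¹ x)) = x ↔ (σ ^ j) (π⁻¹ x) = π⁻¹ x
  rw [show (π ((σ ^ j) (π⁻¹ x)) = x) ↔ (x = π ((σ ^ j) (π⁻¹ x))) from eq_comm,
    ← Equiv.Perm.inv_eq_iff_eq, eq_comm]

lemma nocycle_conj {n : ℕ} (q : ℕ) (π σ : Equiv.Perm (Fin n)) :
    NoCycleLenEq q (π * σ * π⁻¹) ↔ NoCycleLenEq q σ := by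
  constructor
  · intro h x
    have := h (π x)
    rwa [minper_conj, show π⁻¹ (π x) = x from Equiv.Perm.inv_eq_iff_eq.mpr rfl] at this
  · intro h x
    rw [minper_conj]
    exact h _


lemma mem_cosetC_iff {n k : ℕ} (σ : Equiv.Perm (Fin n)) :
    σ ∈ cosetC n k ↔ ∀ i : Fin n, (i:ℕ) < k - 1 → σ ((ckk n k)⁻¹ i) = i := by
  constructor
  · rintro ⟨g, hgfix, rfl⟩ i hi
    show g (ckk n k ((ckk n k)⁻¹ i)) = i
    rw [show ckk n k ((ckk n k)⁻¹ i) = i from (Equiv.eq_symm_apply _).mp rfl]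
    exact hgfix i hi
  · intro h
    refine ⟨σ * (ckk n k)⁻¹, fun i hi => h i hi, by group⟩

lemma ck_inv_apply {n k : ℕ} (hk : 1 ≤ k) (hkn : k ≤ n) (x : Fin n) (hx : (x:ℕ) < k) :
    (ckk n k)⁻¹ x = ⟨((x:ℕ) + (k-1)) % k, lt_of_lt_of_le (Nat.mod_lt _ hk) hkn⟩ := by
  rw [Equiv.Perm.inv_eq_iff_eq, ck_apply_lt hk hkn _ (Nat.mod_lt _ hk)]
  apply Fin.ext
  show (x:ℕ) = (((x:ℕ) + (k-1)) % k + 1) % k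
  rw [Nat.mod_add_mod, show (x:ℕ) + (k-1) + 1 = (x:ℕ) + k by omega,
    Nat.add_mod_right, Nat.mod_eq_of_lt hx]

lemma fin_mk_eq {n a b : ℕ} (h : a = b) (ha : a < n) (hb : b < n) :
    (⟨a, ha⟩ : Fin n) = ⟨b, hb⟩ := Fin.ext h

lemma mem_val_last {n k : ℕ} (hk2 : 2 ≤ k) (hkn : k ≤ n) {σ : Equiv.Perm (Fin n)}
    (hσ : σ ∈ cosetC n k) : σ ⟨k-1, by omega⟩ = ⟨0, by omega⟩ := by
  have h := (mem_cosetC_iff σ).mp hσ ⟨0, by omega⟩ (by simp; omega)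
  rw [ck_inv_apply (by omega) hkn _ (by simp; omega)] at h
  rw [fin_mk_eq (show (((⟨0, by omega⟩ : Fin n) : ℕ) + (k-1)) % k = k - 1 by
      simp [Nat.mod_eq_of_lt (show k - 1 < k by omega)]) _ (by omega)] at h
  exact h

lemma mem_val_step {n k : ℕ} (hk : 1 ≤ k) (hkn : k ≤ n) {σ : Equiv.Perm (Fin n)}
    (hσ : σ ∈ cosetC n k) (j : ℕ) (hj1 : 1 ≤ j) (hj2 : j < k - 1) :
    σ ⟨j-1, by omega⟩ = ⟨j, by omega⟩ := by
  have h := (mem_cosetC_iff σ).mp hσ ⟨j, by omega⟩ (by simpa using hj2)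
  rw [ck_inv_apply hk hkn _ (by simp; omega)] at h
  rw [fin_mk_eq (show (((⟨j, by omega⟩ : Fin n) : ℕ) + (k-1)) % k = j - 1 by
      simp only [show (((⟨j, by omega⟩ : Fin n)) : ℕ) = j from rfl,
        show j + (k-1) = (j-1) + k by omega, Nat.add_mod_right]
      exact Nat.mod_eq_of_lt (by omega)) _ (by omega)] at h
  exact h

lemma mem_cosetC_of {n k : ℕ} (hk : 1 ≤ k) (hkn : k ≤ n) (σ : Equiv.Perm (Fin n))
    (hlast : ∀ (_ : 2 ≤ k), σ ⟨k-1, by omega⟩ = ⟨0, by omega⟩)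
    (hstep : ∀ (j : ℕ) (_ : 1 ≤ j) (_ : j < k - 1), σ ⟨j-1, by omega⟩ = ⟨j, by omega⟩) :
    σ ∈ cosetC n k := by
  rw [mem_cosetC_iff]
  intro i hi
  have hk2 : 2 ≤ k := by omega
  rw [ck_inv_apply hk hkn i (by omega)]
  by_cases hi0 : (i:ℕ) = 0
  · rw [fin_mk_eq (show ((i:ℕ) + (k-1)) % k = k - 1 by
      rw [hi0, Nat.zero_add]; exact Nat.mod_eq_of_lt (by omega)) _ (by omega)]
    rw [hlast hk2]
    exact Fin.ext hi0.symm
  · rw [fin_mk_eq (show ((i:ℕ) + (k-1)) % k = (i:ℕ) - 1 by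
      rw [show (i:ℕ) + (k-1) = ((i:ℕ)-1) + k by omega, Nat.add_mod_right]
      exact Nat.mod_eq_of_lt (by omega)) _ (by omega)]
    rw [hstep (i:ℕ) (by omega) hi]

def eEquiv (n k : ℕ) (hkn : k ≤ n) : Fin (n-k) ≃ {x : Fin n // k ≤ (x:ℕ)} where
  toFun j := ⟨⟨k + (j:ℕ), by have := j.2; omega⟩, by exact Nat.le_add_right _ _⟩
  invFun x := ⟨(x.1:ℕ) - k, by have := x.1.2; have := x.2; omega⟩
  left_inv j := by apply Fin.ext; simp
  right_inv x := by
    apply Subtype.ext; apply Fin.ext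
    have := x.2
    simp
    omega

lemma extend_fix_lt {n k : ℕ} (hkn : k ≤ n) (τ : Equiv.Perm (Fin (n-k))) (x : Fin n)
    (hx : (x:ℕ) < k) : (τ.extendDomain (eEquiv n k hkn)) x = x :=
  Equiv.Perm.extendDomain_apply_not_subtype _ _ (by omega)

lemma extend_minper {n k : ℕ} (hkn : k ≤ n) (τ : Equiv.Perm (Fin (n-k))) (x : Fin n)
    (hx : k ≤ (x:ℕ)) :
    Function.minimalPeriod (τ.extendDomain (eEquiv n k hkn)) x
      = Function.minimalPeriod τ ((eEquiv n k hkn).symm ⟨x, hx⟩) := by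
  apply minper_congr
  intro j
  rw [Equiv.Perm.iterate_eq_pow, Equiv.Perm.iterate_eq_pow, ← Equiv.Perm.extendDomain_pow,
    (τ^j).extendDomain_apply_subtype (eEquiv n k hkn) hx]
  constructor
  · intro h
    have h2 : (eEquiv n k hkn) ((τ^j) ((eEquiv n k hkn).symm ⟨x, hx⟩)) = ⟨x, hx⟩ :=
      Subtype.ext h
    have h3 := congrArg (eEquiv n k hkn).symm h2
    simpa using h3
  · intro h
    rw [h]
    simp

lemma minper_gc_lt {n k : ℕ} (hk : 1 ≤ k) (hkn : k ≤ n) (g : Equiv.Perm (Fin n))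
    (hgfix : ∀ x : Fin n, (x:ℕ) < k → g x = x) (x : Fin n) (hx : (x:ℕ) < k) :
    Function.minimalPeriod (g * ckk n k) x = k := by
  rw [minper_mul_left g (ckk n k) (fun y => (y:ℕ) < k) hgfix
    (fun y hy => ck_apply_ge y (by omega)) hx]
  exact minimalPeriod_ck hk hkn x hx

lemma minper_gc_ge {n k : ℕ} (g : Equiv.Perm (Fin n))
    (hgfix : ∀ x : Fin n, (x:ℕ) < k → g x = x) (x : Fin n) (hx : k ≤ (x:ℕ)) :
    Function.minimalPeriod (g * ckk n k) x = Function.minimalPeriod g x := by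
  exact minper_mul_right g (ckk n k) (fun y => (y:ℕ) < k) hgfix
    (fun y hy => ck_apply_ge y (by omega)) (by omega)

def Fmap (n k : ℕ) (hkn : k ≤ n) (τ : Equiv.Perm (Fin (n-k))) : Equiv.Perm (Fin n) :=
  τ.extendDomain (eEquiv n k hkn) * ckk n k

lemma Fmap_injective {n k : ℕ} (hkn : k ≤ n) : Function.Injective (Fmap n k hkn) := by
  intro a b h
  have h2 : a.extendDomain (eEquiv n k hkn) = b.extendDomain (eEquiv n k hkn) :=
    mul_right_cancel h
  exact Equiv.Perm.extendDomainHom_injective (eEquiv n k hkn) h2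

def Aset (q n k : ℕ) (hk : 1 ≤ k) (hkn : k < n) : Set (Equiv.Perm (Fin n)) :=
  {σ | (σ ∈ cosetC n k ∧ NoCycleLenEq q σ) ∧
    (σ * (ckk n k)⁻¹) ⟨k-1, by omega⟩ = ⟨k-1, by omega⟩}

lemma Aset_gfix {q n k : ℕ} (hk : 1 ≤ k) (hkn : k < n) {σ : Equiv.Perm (Fin n)}
    (hσ : σ ∈ Aset q n k hk hkn) :
    ∀ x : Fin n, (x:ℕ) < k → (σ * (ckk n k)⁻¹) x = x := by
  intro x hx
  by_cases hx2 : (x:ℕ) < k - 1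
  · exact (mem_cosetC_iff σ).mp hσ.1.1 x hx2
  · have hx3 : x = ⟨k-1, by omega⟩ := Fin.ext (show (x:ℕ) = k - 1 by omega)
    rw [hx3]
    exact hσ.2

lemma Aset_empty {q n k : ℕ} (hk : 1 ≤ k) (hkn : k < n) (hq : q = k) :
    Aset q n k hk hkn = ∅ := by
  ext σ
  simp only [Set.mem_empty_iff_false, iff_false]
  intro hσ
  have hgfix := Aset_gfix hk hkn hσ
  have hdec : σ = (σ * (ckk n k)⁻¹) * ckk n k := by group
  have h1 := minper_gc_lt hk hkn.le (σ * (ckk n k)⁻¹) hgfix ⟨0, by omega⟩ (by show 0 < k; omega)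
  rw [← hdec] at h1
  exact hσ.1.2 ⟨0, by omega⟩ (h1.trans hq.symm)

lemma Aset_img {q n k : ℕ} (hk : 1 ≤ k) (hkn : k < n) (hq : q ≠ k) :
    Aset q n k hk hkn = Fmap n k hkn.le '' {τ | NoCycleLenEq q τ} := by
  ext σ
  constructor
  · intro hσ
    have hgfix := Aset_gfix hk hkn hσ
    set g := σ * (ckk n k)⁻¹ with hgdef
    have hdec : σ = g * ckk n k := by rw [hgdef]; group
    have hiff : ∀ x : Fin n, k ≤ (x:ℕ) ↔ k ≤ ((g x):ℕ) := by
      intro x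
      constructor
      · intro hx
        by_contra hgx
        have h1 : g (g x) = g x := hgfix _ (by omega)
        have h2 : g x = x := g.injective h1
        rw [h2] at hgx; omega
      · intro hx
        by_contra hx2
        rw [hgfix x (by omega)] at hx; omega
    refine ⟨Equiv.permCongr (eEquiv n k hkn.le).symm (g.subtypePerm (fun x => (hiff x).symm)), ?_, ?_⟩
    · -- NoCycleLenEq q τ
      intro y
      set τ := Equiv.permCongr (eEquiv n k hkn.le).symm (g.subtypePerm (fun x => (hiff x).symm)) with hτ
      have hext : τ.extendDomain (eEquiv n k hkn.le) = g := by
        ext x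
        by_cases hx : k ≤ (x:ℕ)
        · rw [τ.extendDomain_apply_subtype (eEquiv n k hkn.le) hx]
          simp [hτ, Equiv.permCongr_apply, Equiv.Perm.subtypePerm_apply]
        · rw [extend_fix_lt hkn.le τ x (by omega), hgfix x (by omega)]
      have h1 := extend_minper hkn.le τ ((eEquiv n k hkn.le) y) ((eEquiv n k hkn.le) y).2
      rw [hext] at h1
      have h2 : ((eEquiv n k hkn.le).symm
          ⟨((eEquiv n k hkn.le) y : Fin n), ((eEquiv n k hkn.le) y).2⟩) = y := by
        rw [Subtype.eta]; exact Equiv.symm_apply_apply _ _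
      rw [h2] at h1
      rw [← h1]
      have h3 := minper_gc_ge g hgfix ((eEquiv n k hkn.le) y) ((eEquiv n k hkn.le) y).2
      rw [← h3, ← hdec]
      exact hσ.1.2 _
    · -- Fmap τ = σ
      show _ * ckk n k = σ
      have hext : (Equiv.permCongr (eEquiv n k hkn.le).symm
          (g.subtypePerm (fun x => (hiff x).symm))).extendDomain (eEquiv n k hkn.le) = g := by
        ext x
        by_cases hx : k ≤ (x:ℕ)
        · rw [Equiv.Perm.extendDomain_apply_subtype _ (eEquiv n k hkn.le) hx]
          simp [Equiv.permCongr_apply, Equiv.Perm.subtypePerm_apply]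
        · rw [extend_fix_lt hkn.le _ x (by omega), hgfix x (by omega)]
      rw [hext, hgdef]
      group
  · rintro ⟨τ, hτ, rfl⟩
    show (τ.extendDomain (eEquiv n k hkn.le) * ckk n k) ∈ Aset q n k hk hkn
    have hgfix : ∀ x : Fin n, (x:ℕ) < k → (τ.extendDomain (eEquiv n k hkn.le)) x = x :=
      fun x hx => extend_fix_lt hkn.le τ x hx
    have hcan : Fmap n k hkn.le τ * (ckk n k)⁻¹ = τ.extendDomain (eEquiv n k hkn.le) := by
      show τ.extendDomain (eEquiv n k hkn.le) * ckk n k * (ckk n k)⁻¹ = _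
      group
    refine ⟨⟨⟨τ.extendDomain (eEquiv n k hkn.le), fun i hi => hgfix i (by omega), rfl⟩, ?_⟩, ?_⟩
    · intro x
      by_cases hx : (x:ℕ) < k
      · rw [minper_gc_lt hk hkn.le _ hgfix x hx]
        exact fun h => hq h.symm
      · rw [minper_gc_ge _ hgfix x (by omega)]
        rw [extend_minper hkn.le τ x (by omega)]
        exact hτ _
    · rw [show τ.extendDomain (eEquiv n k hkn.le) * ckk n k * (ckk n k)⁻¹
          = τ.extendDomain (eEquiv n k hkn.le) by group]
      exact hgfix _ (show k - 1 < k by omega)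

def piM {n k : ℕ} (hk : 1 ≤ k) (hkn : k < n) (m : Fin n) : Equiv.Perm (Fin n) :=
  Equiv.swap ⟨k, hkn⟩ m * Equiv.swap ⟨k-1, by omega⟩ ⟨k, hkn⟩

lemma piM_km1 {n k : ℕ} (hk : 1 ≤ k) (hkn : k < n) (m : Fin n) (hm : k ≤ (m:ℕ)) :
    piM hk hkn m ⟨k-1, by omega⟩ = m := by
  show Equiv.swap ⟨k, hkn⟩ m (Equiv.swap ⟨k-1, by omega⟩ ⟨k, hkn⟩ ⟨k-1, by omega⟩) = m
  rw [Equiv.swap_apply_left, Equiv.swap_apply_left]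

lemma piM_k {n k : ℕ} (hk : 1 ≤ k) (hkn : k < n) (m : Fin n) (hm : k ≤ (m:ℕ)) :
    piM hk hkn m ⟨k, hkn⟩ = ⟨k-1, by omega⟩ := by
  show Equiv.swap ⟨k, hkn⟩ m (Equiv.swap ⟨k-1, by omega⟩ ⟨k, hkn⟩ ⟨k, hkn⟩) = _
  rw [Equiv.swap_apply_right, Equiv.swap_apply_of_ne_of_ne
    (fun h => absurd (show k - 1 = k from congrArg Fin.val h) (by omega))
    (fun h => absurd (show k - 1 = (m:ℕ) from congrArg Fin.val h) (by omega))]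

lemma piM_fix {n k : ℕ} (hk : 1 ≤ k) (hkn : k < n) (m : Fin n) (x : Fin n)
    (h1 : (x:ℕ) ≠ k - 1) (h2 : (x:ℕ) ≠ k) (h3 : x ≠ m) :
    piM hk hkn m x = x := by
  show Equiv.swap ⟨k, hkn⟩ m (Equiv.swap ⟨k-1, by omega⟩ ⟨k, hkn⟩ x) = x
  have hin : Equiv.swap (⟨k-1, by omega⟩ : Fin n) ⟨k, hkn⟩ x = x :=
    Equiv.swap_apply_of_ne_of_ne (fun h => h1 (congrArg Fin.val h))
      (fun h => h2 (congrArg Fin.val h))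
  rw [hin]
  exact Equiv.swap_apply_of_ne_of_ne (fun h => h2 (congrArg Fin.val h)) h3

lemma piM_inv_km1 {n k : ℕ} (hk : 1 ≤ k) (hkn : k < n) (m : Fin n) (hm : k ≤ (m:ℕ)) :
    (piM hk hkn m)⁻¹ ⟨k-1, by omega⟩ = ⟨k, hkn⟩ := by
  rw [Equiv.Perm.inv_eq_iff_eq]
  exact (piM_k hk hkn m hm).symm

lemma piM_inv_m {n k : ℕ} (hk : 1 ≤ k) (hkn : k < n) (m : Fin n) (hm : k ≤ (m:ℕ)) :
    (piM hk hkn m)⁻¹ m = ⟨k-1, by omega⟩ := by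
  rw [Equiv.Perm.inv_eq_iff_eq]
  exact (piM_km1 hk hkn m hm).symm

lemma piM_inv_fix {n k : ℕ} (hk : 1 ≤ k) (hkn : k < n) (m : Fin n) (x : Fin n)
    (h1 : (x:ℕ) ≠ k - 1) (h2 : (x:ℕ) ≠ k) (h3 : x ≠ m) :
    (piM hk hkn m)⁻¹ x = x := by
  rw [Equiv.Perm.inv_eq_iff_eq]
  exact (piM_fix hk hkn m x h1 h2 h3).symm

lemma conjApply {n : ℕ} (π σ : Equiv.Perm (Fin n)) (x : Fin n) :
    (π * σ * π⁻¹) x = π (σ (π⁻¹ x)) := rfl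

lemma Bmap_mem {q n k : ℕ} (hk : 1 ≤ k) (hkn : k < n) (m : Fin n) (hm : k ≤ (m:ℕ))
    {σ' : Equiv.Perm (Fin n)} (hσ' : σ' ∈ cosetC n (k+1)) :
    piM hk hkn m * σ' * (piM hk hkn m)⁻¹ ∈ cosetC n k := by
  apply mem_cosetC_of hk hkn.le
  · intro hk2
    rw [conjApply, piM_inv_km1 hk hkn m hm]
    have h1 : σ' ⟨k, hkn⟩ = ⟨0, by omega⟩ := mem_val_last (by omega) (by omega) hσ'
    rw [h1]
    exact piM_fix hk hkn m _ (by show (0:ℕ) ≠ k - 1; omega) (by show (0:ℕ) ≠ k; omega)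
      (fun h => by have := congrArg Fin.val h; simp at this; omega)
  · intro j hj1 hj2
    rw [conjApply, piM_inv_fix hk hkn m _ (by show j - 1 ≠ k - 1; omega)
      (by show j - 1 ≠ k; omega)
      (fun h => by have : j - 1 = (m:ℕ) := congrArg Fin.val h; omega)]
    have h1 : σ' ⟨j-1, by omega⟩ = ⟨j, by omega⟩ :=
      mem_val_step (by omega) (by omega) hσ' j hj1 (by omega)
    rw [h1]
    exact piM_fix hk hkn m _ (by show (j:ℕ) ≠ k - 1; omega) (by show (j:ℕ) ≠ k; omega)
      (fun h => by have : (j:ℕ) = (m:ℕ) := congrArg Fin.val h; omega)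

lemma Bmap_val {q n k : ℕ} (hk : 1 ≤ k) (hkn : k < n) (m : Fin n) (hm : k ≤ (m:ℕ))
    {σ' : Equiv.Perm (Fin n)} (hσ' : σ' ∈ cosetC n (k+1)) :
    (piM hk hkn m * σ' * (piM hk hkn m)⁻¹) ((ckk n k)⁻¹ ⟨k-1, by omega⟩) = m := by
  rw [ck_inv_apply hk hkn.le _ (show k - 1 < k by omega)]
  by_cases hk2 : 2 ≤ k
  · rw [fin_mk_eq (show (((⟨k-1, by omega⟩ : Fin n) : ℕ) + (k-1)) % k = k - 2 by
      show (k - 1 + (k-1)) % k = k - 2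
      rw [show k - 1 + (k-1) = (k-2) + k by omega, Nat.add_mod_right]
      exact Nat.mod_eq_of_lt (by omega)) _ (by omega)]
    rw [conjApply, piM_inv_fix hk hkn m _ (by show k - 2 ≠ k - 1; omega)
      (by show k - 2 ≠ k; omega)
      (fun h => by have : k - 2 = (m:ℕ) := congrArg Fin.val h; omega)]
    have h1 : σ' ⟨k-2, by omega⟩ = ⟨k-1, by omega⟩ := by
      have := mem_val_step (show 1 ≤ k+1 by omega) (by omega) hσ' (k-1) (by omega) (by omega)
      rw [fin_mk_eq (show k-1-1 = k-2 by omega) _ (by omega)] at this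
      exact this
    rw [h1]
    exact piM_km1 hk hkn m hm
  · have hk1 : k = 1 := by omega
    subst hk1
    rw [fin_mk_eq (show (((⟨0, by omega⟩ : Fin n) : ℕ) + 0) % 1 = 0 by simp) _ (by omega)]
    rw [conjApply, piM_inv_km1 hk hkn m hm]
    have h1 : σ' ⟨1, by omega⟩ = ⟨0, by omega⟩ := mem_val_last (by omega) (by omega) hσ'
    rw [h1]
    exact piM_km1 hk hkn m hm


lemma mem_cosetC_of' {n k : ℕ} (hk : 1 ≤ k) (hkn : k ≤ n) (σ : Equiv.Perm (Fin n))
    (hlast : ∀ x y : Fin n, 2 ≤ k → (x:ℕ) = k - 1 → (y:ℕ) = 0 → σ x = y)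
    (hstep : ∀ (j : ℕ) (x y : Fin n), 1 ≤ j → j < k - 1 → (x:ℕ) = j - 1 → (y:ℕ) = j →
      σ x = y) :
    σ ∈ cosetC n k :=
  mem_cosetC_of hk hkn σ (fun h2 => hlast _ _ h2 rfl rfl)
    (fun j h1 h2 => hstep j _ _ h1 h2 rfl rfl)

lemma mem_val_last' {n k : ℕ} (hk2 : 2 ≤ k) (hkn : k ≤ n) {σ : Equiv.Perm (Fin n)}
    (hσ : σ ∈ cosetC n k) (x y : Fin n) (hx : (x:ℕ) = k - 1) (hy : (y:ℕ) = 0) :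
    σ x = y := by
  have hx' : x = ⟨k-1, by omega⟩ := Fin.ext hx
  have hy' : y = ⟨0, by omega⟩ := Fin.ext hy
  rw [hx', hy']
  exact mem_val_last hk2 hkn hσ

lemma mem_val_step' {n k : ℕ} (hk : 1 ≤ k) (hkn : k ≤ n) {σ : Equiv.Perm (Fin n)}
    (hσ : σ ∈ cosetC n k) (j : ℕ) (x y : Fin n) (hj1 : 1 ≤ j) (hj2 : j < k - 1)
    (hx : (x:ℕ) = j - 1) (hy : (y:ℕ) = j) : σ x = y := by
  have hx' : x = ⟨j-1, by omega⟩ := Fin.ext hx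
  have hy' : y = ⟨j, by omega⟩ := Fin.ext hy
  rw [hx', hy']
  exact mem_val_step hk hkn hσ j hj1 hj2

lemma ck_inv_val {n k : ℕ} (hk : 1 ≤ k) (hkn : k ≤ n) (x y : Fin n) (hx : (x:ℕ) < k)
    (hy : (y:ℕ) = ((x:ℕ) + (k-1)) % k) : (ckk n k)⁻¹ x = y := by
  rw [ck_inv_apply hk hkn x hx]
  exact (Fin.ext hy).symm


set_option maxHeartbeats 1000000 in
lemma B_surj {q n k : ℕ} (hk : 1 ≤ k) (hkn : k < n) {σ : Equiv.Perm (Fin n)}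
    (hσ : σ ∈ cosetC n k) (hno : NoCycleLenEq q σ)
    (hne : (σ * (ckk n k)⁻¹) ⟨k-1, by omega⟩ ≠ ⟨k-1, by omega⟩) :
    ∃ m : Fin n, k ≤ (m:ℕ) ∧ ∃ σ' : Equiv.Perm (Fin n), σ' ∈ cosetC n (k+1) ∧
      NoCycleLenEq q σ' ∧ σ = piM hk hkn m * σ' * (piM hk hkn m)⁻¹ := by
  obtain ⟨m, hmdef⟩ : ∃ m : Fin n, (σ * (ckk n k)⁻¹) ⟨k-1, by omega⟩ = m := ⟨_, rfl⟩
  rw [hmdef] at hne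
  have hgfix : ∀ x : Fin n, (x:ℕ) < k - 1 → (σ * (ckk n k)⁻¹) x = x :=
    (mem_cosetC_iff σ).mp hσ
  have hm : k ≤ (m:ℕ) := by
    by_contra hmlt
    by_cases hcase : (m:ℕ) < k - 1
    · have h1 : (σ * (ckk n k)⁻¹) m = m := hgfix m hcase
      have h2 : (⟨k-1, by omega⟩ : Fin n) = m :=
        (σ * (ckk n k)⁻¹).injective (h1.symm ▸ hmdef)
      have := congrArg Fin.val h2
      simp at this
      omega
    · exact hne (Fin.ext (show (m:ℕ) = k - 1 by omega))
  have hval : ∀ z : Fin n, (z:ℕ) = (k - 1 + (k-1)) % k → σ z = m := by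
    intro z hz
    rw [← hmdef]
    show σ z = σ ((ckk n k)⁻¹ _)
    congr 1
    exact (ck_inv_val hk hkn.le _ z (show k - 1 < k by omega) hz).symm
  refine ⟨m, hm, (piM hk hkn m)⁻¹ * σ * piM hk hkn m, ?_, ?_, by group⟩
  · -- membership in cosetC n (k+1)
    have hconj : ∀ x : Fin n, ((piM hk hkn m)⁻¹ * σ * piM hk hkn m) x
        = (piM hk hkn m)⁻¹ (σ (piM hk hkn m x)) := fun x => rfl
    apply mem_cosetC_of' (by omega) (by omega)
    · intro x y _ hx hy
      rw [hconj]
      have hx' : x = ⟨k, hkn⟩ := Fin.ext (show (x:ℕ) = k by omega)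
      rw [hx', piM_k hk hkn m hm]
      by_cases hk2 : 2 ≤ k
      · rw [mem_val_last' hk2 hkn.le hσ ⟨k-1, by omega⟩ ⟨0, by omega⟩ rfl rfl]
        rw [piM_inv_fix hk hkn m _ (by show (0:ℕ) ≠ k - 1; omega)
          (by show (0:ℕ) ≠ k; omega)
          (fun h => by have : (0:ℕ) = (m:ℕ) := congrArg Fin.val h; omega)]
        exact (Fin.ext hy).symm
      · have hk1 : k = 1 := by omega
        rw [hval ⟨k-1, by omega⟩ (by show k - 1 = (k - 1 + (k-1)) % k; subst hk1; simp)]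
        rw [piM_inv_m hk hkn m hm]
        exact (Fin.ext (by omega : (y:ℕ) = k - 1)).symm
    · intro j x y hj1 hj2 hx hy
      have hj2' : j < k := by omega
      rw [hconj]
      by_cases hcase : j ≤ k - 2
      · have hk2 : 2 ≤ k := by omega
        rw [piM_fix hk hkn m x (by omega) (by omega)
          (fun h => by have : (x:ℕ) = (m:ℕ) := congrArg Fin.val h; omega)]
        rw [mem_val_step' hk hkn.le hσ j x ⟨j, by omega⟩ hj1 (by omega) hx rfl]
        rw [piM_inv_fix hk hkn m _ (by show (j:ℕ) ≠ k - 1; omega)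
          (by show (j:ℕ) ≠ k; omega)
          (fun h => by have : (j:ℕ) = (m:ℕ) := congrArg Fin.val h; omega)]
        exact (Fin.ext hy).symm
      · have hjk : j = k - 1 := by omega
        have hk2 : 2 ≤ k := by omega
        rw [piM_fix hk hkn m x (by omega) (by omega)
          (fun h => by have : (x:ℕ) = (m:ℕ) := congrArg Fin.val h; omega)]
        rw [hval x (by
          rw [show k - 1 + (k-1) = (k-2) + k by omega, Nat.add_mod_right,
            Nat.mod_eq_of_lt (by omega)]
          omega)]
        rw [piM_inv_m hk hkn m hm]
        exact (Fin.ext (by omega : (y:ℕ) = k - 1)).symm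
  · -- NoCycleLenEq
    have h1 := nocycle_conj q (piM hk hkn m) ((piM hk hkn m)⁻¹ * σ * piM hk hkn m)
    have h2 : piM hk hkn m * ((piM hk hkn m)⁻¹ * σ * piM hk hkn m) * (piM hk hkn m)⁻¹
        = σ := by group
    rw [h2] at h1
    exact h1.mp hno

def Bset (q n k : ℕ) (hk : 1 ≤ k) (hkn : k < n) : Set (Equiv.Perm (Fin n)) :=
  {σ | (σ ∈ cosetC n k ∧ NoCycleLenEq q σ) ∧
    (σ * (ckk n k)⁻¹) ⟨k-1, by omega⟩ ≠ ⟨k-1, by omega⟩}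

lemma Bset_eq (q n k : ℕ) (hk : 1 ≤ k) (hkn : k < n) :
    Bset q n k hk hkn =
      (fun p : Fin n × Equiv.Perm (Fin n) => piM hk hkn p.1 * p.2 * (piM hk hkn p.1)⁻¹) ''
        (({m : Fin n | k ≤ (m:ℕ)}) ×ˢ {σ' | σ' ∈ cosetC n (k+1) ∧ NoCycleLenEq q σ'}) := by
  ext σ
  constructor
  · rintro ⟨⟨h1, h2⟩, h3⟩
    obtain ⟨m, hm, σ', hσ'mem, hσ'no, hσeq⟩ := B_surj hk hkn h1 h2 h3
    exact ⟨(m, σ'), ⟨hm, hσ'mem, hσ'no⟩, hσeq.symm⟩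
  · rintro ⟨⟨m, σ'⟩, ⟨hm, hσ'mem, hσ'no⟩, rfl⟩
    show (piM hk hkn m * σ' * (piM hk hkn m)⁻¹) ∈ Bset q n k hk hkn
    refine ⟨⟨Bmap_mem (q := q) hk hkn m hm hσ'mem, ?_⟩, ?_⟩
    · exact (nocycle_conj q (piM hk hkn m) σ').mpr hσ'no
    · intro hcontra
      have hv := Bmap_val (q := q) hk hkn m hm hσ'mem
      have h5 : m = (⟨k-1, by omega⟩ : Fin n) := by rw [← hv]; exact hcontra
      have h6 : (m:ℕ) = k - 1 := congrArg Fin.val h5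
      have hm' : k ≤ (m:ℕ) := hm
      omega

lemma Bmap_injOn (q n k : ℕ) (hk : 1 ≤ k) (hkn : k < n) :
    Set.InjOn (fun p : Fin n × Equiv.Perm (Fin n) =>
        piM hk hkn p.1 * p.2 * (piM hk hkn p.1)⁻¹)
      (({m : Fin n | k ≤ (m:ℕ)}) ×ˢ {σ' | σ' ∈ cosetC n (k+1) ∧ NoCycleLenEq q σ'}) := by
  rintro ⟨m1, σ1⟩ hp1 ⟨m2, σ2⟩ hp2 heq
  obtain ⟨hm1, hσ1⟩ := hp1
  obtain ⟨hm2, hσ2⟩ := hp2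
  simp only at heq
  have h1 := Bmap_val (q := q) hk hkn m1 hm1 hσ1.1
  have h2 := Bmap_val (q := q) hk hkn m2 hm2 hσ2.1
  have hm : m1 = m2 := by rw [← h1, ← h2, heq]
  subst hm
  have hσ : σ1 = σ2 := mul_left_cancel (mul_right_cancel heq)
  rw [hσ]

lemma Mset_ncard {n k : ℕ} (hkn : k < n) : {m : Fin n | k ≤ (m:ℕ)}.ncard = n - k := by
  have h1 : {m : Fin n | k ≤ (m:ℕ)} = ↑(Finset.Ici (⟨k, hkn⟩ : Fin n)) := by
    ext x
    simp [Fin.le_def]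
  rw [h1, Set.ncard_coe_finset, Fin.card_Ici]

lemma prod_ncard {α β : Type*} (s : Set α) (t : Set β) :
    (s ×ˢ t).ncard = s.ncard * t.ncard := by
  rw [← Nat.card_coe_set_eq, ← Nat.card_coe_set_eq, ← Nat.card_coe_set_eq,
    Nat.card_congr (Equiv.Set.prod s t), Nat.card_prod]

theorem stmt_6 (q n k : ℕ) (hk : 1 ≤ k) (hkn : k < n) :
    {σ ∈ cosetC n k | NoCycleLenEq q σ}.ncard =
      (if q ≠ k then 1 else 0) *
          {σ : Equiv.Perm (Fin (n - k)) | NoCycleLenEq q σ}.ncard +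
        (n - k) * {σ ∈ cosetC n (k + 1) | NoCycleLenEq q σ}.ncard := by
  have hS : {σ ∈ cosetC n k | NoCycleLenEq q σ} = Aset q n k hk hkn ∪ Bset q n k hk hkn := by
    ext σ
    constructor
    · rintro ⟨h1, h2⟩
      by_cases h3 : (σ * (ckk n k)⁻¹) ⟨k-1, by omega⟩ = ⟨k-1, by omega⟩
      · exact Or.inl ⟨⟨h1, h2⟩, h3⟩
      · exact Or.inr ⟨⟨h1, h2⟩, h3⟩
    · rintro (⟨⟨h1, h2⟩, _⟩ | ⟨⟨h1, h2⟩, _⟩) <;> exact ⟨h1, h2⟩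
  have hdisj : Disjoint (Aset q n k hk hkn) (Bset q n k hk hkn) := by
    rw [Set.disjoint_left]
    rintro σ ⟨_, h1⟩ ⟨_, h2⟩
    exact h2 h1
  rw [hS, Set.ncard_union_eq hdisj (Set.toFinite _) (Set.toFinite _)]
  have hA : (Aset q n k hk hkn).ncard =
      (if q ≠ k then 1 else 0) * {σ : Equiv.Perm (Fin (n - k)) | NoCycleLenEq q σ}.ncard := by
    by_cases hq : q = k
    · rw [Aset_empty hk hkn hq, Set.ncard_empty, if_neg (by simp [hq]), zero_mul]
    · rw [Aset_img hk hkn hq, Set.ncard_image_of_injOn ((Fmap_injective hkn.le).injOn),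
        if_pos hq, one_mul]
  have hB : (Bset q n k hk hkn).ncard =
      (n - k) * {σ ∈ cosetC n (k + 1) | NoCycleLenEq q σ}.ncard := by
    rw [Bset_eq q n k hk hkn, Set.ncard_image_of_injOn (Bmap_injOn q n k hk hkn),
      prod_ncard, Mset_ncard hkn]
  rw [hA, hB]
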